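/- Let k be a perfect field of characteristic p > 0 and let B be a commutative k-algebra. Let T be the base-change functor from the category of commutative k-algebras to the category of commutative B-algebras sending R to B ⊗_k R (and a k-algebra map f to id_B ⊗ f). Then every natural isomorphism from T to itself is the identity natural transformation. -/

import Mathlib

open TensorProduct


universe u
variable (k : Type u) [Field k] (B : Type u) [CommRing B] [Algebra k B]

/-- naturality ⇒ universal formula for η on `1 ⊗ r`. -/
theorem aux_key
    (η : ∀ (R : Type u) [CommRing R] [Algebra k R], (B ⊗[k] R) ≃ₐ[B] (B ⊗[k] R))
    (hnat : ∀ (R : Type u) [CommRing R] [Algebra k R] (S : Type u) [CommRing S] [Algebra k S]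
      (f : R →ₐ[k] S),
      (Algebra.TensorProduct.map (AlgHom.id B B) f).comp (η R).toAlgHom
        = ((η S).toAlgHom).comp (Algebra.TensorProduct.map (AlgHom.id B B) f))
    (R : Type u) [CommRing R] [Algebra k R] (r : R) :
    η R (1 ⊗ₜ r) = Polynomial.eval₂ (Algebra.TensorProduct.includeLeftRingHom)
      ((1 : B) ⊗ₜ r)
      ((polyEquivTensor k B).symm (η (Polynomial k) (1 ⊗ₜ Polynomial.X))) := by
  have h := congrArg (fun (g : (B ⊗[k] Polynomial k) →ₐ[B] (B ⊗[k] R)) => g (1 ⊗ₜ Polynomial.X))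
    (hnat (Polynomial k) R (Polynomial.aeval r))
  simp only [AlgHom.comp_apply, AlgEquiv.toAlgHom_eq_coe, AlgHom.coe_coe, AlgEquiv.coe_algHom,
    Algebra.TensorProduct.map_tmul, AlgHom.coe_id, id_eq, Polynomial.aeval_X] at h
  rw [← h]
  set q := (polyEquivTensor k B).symm (η (Polynomial k) (1 ⊗ₜ Polynomial.X)) with hq
  have hT : η (Polynomial k) (1 ⊗ₜ Polynomial.X)
      = Polynomial.eval₂ (Algebra.TensorProduct.includeLeftRingHom) ((1:B) ⊗ₜ Polynomial.X) q := by
    have := (polyEquivTensor k B).apply_symm_apply (η (Polynomial k) (1 ⊗ₜ Polynomial.X))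
    rw [← this, hq, polyEquivTensor_apply]
    rfl
  rw [hT]
  have h2 := Polynomial.hom_eval₂ q Algebra.TensorProduct.includeLeftRingHom
    ((Algebra.TensorProduct.map (AlgHom.id B B) (Polynomial.aeval r)).toRingHom)
    ((1:B) ⊗ₜ[k] (Polynomial.X : Polynomial k))
  simp only [AlgHom.toRingHom_eq_coe, RingHom.coe_coe] at h2
  rw [h2]
  congr 1
  · ext b
    simp [Algebra.TensorProduct.includeLeftRingHom_apply]
  · simp [Algebra.TensorProduct.map_tmul]

theorem aux_symm_nat
    (η : ∀ (R : Type u) [CommRing R] [Algebra k R], (B ⊗[k] R) ≃ₐ[B] (B ⊗[k] R))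
    (hnat : ∀ (R : Type u) [CommRing R] [Algebra k R] (S : Type u) [CommRing S] [Algebra k S]
      (f : R →ₐ[k] S),
      (Algebra.TensorProduct.map (AlgHom.id B B) f).comp (η R).toAlgHom
        = ((η S).toAlgHom).comp (Algebra.TensorProduct.map (AlgHom.id B B) f)) :
    ∀ (R : Type u) [CommRing R] [Algebra k R] (S : Type u) [CommRing S] [Algebra k S]
      (f : R →ₐ[k] S),
      (Algebra.TensorProduct.map (AlgHom.id B B) f).comp ((η R).symm).toAlgHom
        = (((η S).symm).toAlgHom).comp (Algebra.TensorProduct.map (AlgHom.id B B) f) := by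
  intro R _ _ S _ _ f
  apply AlgHom.ext
  intro x
  have h := congrArg (fun (g : (B ⊗[k] R) →ₐ[B] (B ⊗[k] S)) => g ((η R).symm x))
    (hnat R S f)
  simp only [AlgHom.comp_apply, AlgEquiv.toAlgHom_eq_coe, AlgHom.coe_coe, AlgEquiv.coe_algHom,
    AlgEquiv.apply_symm_apply] at h ⊢
  rw [h, AlgEquiv.symm_apply_apply]

lemma fs_lemma (a b c d : ℕ) :
    (Finsupp.single (0 : Fin 2) a + Finsupp.single (1 : Fin 2) b
      = Finsupp.single 0 c + Finsupp.single 1 d) ↔ (a = c ∧ b = d) := by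
  constructor
  · intro h
    constructor
    · have h0 := DFunLike.congr_fun h 0
      simpa using h0
    · have h1 := DFunLike.congr_fun h 1
      simpa using h1
  · rintro ⟨rfl, rfl⟩; rfl

theorem aux_orth
    (η : ∀ (R : Type u) [CommRing R] [Algebra k R], (B ⊗[k] R) ≃ₐ[B] (B ⊗[k] R))
    (hnat : ∀ (R : Type u) [CommRing R] [Algebra k R] (S : Type u) [CommRing S] [Algebra k S]
      (f : R →ₐ[k] S),
      (Algebra.TensorProduct.map (AlgHom.id B B) f).comp (η R).toAlgHom
        = ((η S).toAlgHom).comp (Algebra.TensorProduct.map (AlgHom.id B B) f))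
    (i j : ℕ) :
    ((polyEquivTensor k B).symm (η (Polynomial k) (1 ⊗ₜ Polynomial.X))).coeff i *
      ((polyEquivTensor k B).symm (η (Polynomial k) (1 ⊗ₜ Polynomial.X))).coeff j
    = if i = j then ((polyEquivTensor k B).symm (η (Polynomial k) (1 ⊗ₜ Polynomial.X))).coeff i
      else 0 := by
  set q := (polyEquivTensor k B).symm (η (Polynomial k) (1 ⊗ₜ Polynomial.X)) with hqdef
  -- multiplicativity in B ⊗ MvPolynomial (Fin 2) k
  have hmul : η (MvPolynomial (Fin 2) k) ((1:B) ⊗ₜ (MvPolynomial.X 0 * MvPolynomial.X 1))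
      = η (MvPolynomial (Fin 2) k) ((1:B) ⊗ₜ MvPolynomial.X 0)
        * η (MvPolynomial (Fin 2) k) ((1:B) ⊗ₜ MvPolynomial.X 1) := by
    rw [← map_mul]
    congr 1
    rw [Algebra.TensorProduct.tmul_mul_tmul, one_mul]
  rw [aux_key k B η hnat _ (MvPolynomial.X 0 * MvPolynomial.X 1),
    aux_key k B η hnat _ (MvPolynomial.X 0), aux_key k B η hnat _ (MvPolynomial.X 1),
    ← hqdef] at hmul
  -- push to MvPolynomial (Fin 2) B
  set Φ : (B ⊗[k] MvPolynomial (Fin 2) k) →ₐ[k] MvPolynomial (Fin 2) B :=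
    Algebra.TensorProduct.productMap (IsScalarTower.toAlgHom k B (MvPolynomial (Fin 2) B))
      (MvPolynomial.aeval fun i => (MvPolynomial.X i : MvPolynomial (Fin 2) B)) with hΦ
  have hΦincl : (Φ : (B ⊗[k] MvPolynomial (Fin 2) k) →+* MvPolynomial (Fin 2) B).comp
      Algebra.TensorProduct.includeLeftRingHom = (MvPolynomial.C : B →+* MvPolynomial (Fin 2) B) := by
    ext b
    simp [hΦ, Algebra.TensorProduct.includeLeftRingHom_apply, MvPolynomial.algebraMap_eq]
  have hE := congrArg Φ hmul
  rw [map_mul] at hE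
  have push : ∀ (z : MvPolynomial (Fin 2) k),
      Φ (Polynomial.eval₂ Algebra.TensorProduct.includeLeftRingHom ((1:B) ⊗ₜ z) q)
        = Polynomial.eval₂ MvPolynomial.C (MvPolynomial.aeval (fun i => (MvPolynomial.X i : MvPolynomial (Fin 2) B)) z) q := by
    intro z
    have h2 := Polynomial.hom_eval₂ q Algebra.TensorProduct.includeLeftRingHom
      (Φ : (B ⊗[k] MvPolynomial (Fin 2) k) →+* MvPolynomial (Fin 2) B) ((1:B) ⊗ₜ[k] z)
    rw [hΦincl] at h2
    have : Φ ((1:B) ⊗ₜ[k] z) = MvPolynomial.aeval (fun i => (MvPolynomial.X i : MvPolynomial (Fin 2) B)) z := by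
      simp [hΦ]
    rw [← this]
    exact h2
  rw [push, push, push] at hE
  simp only [map_mul, MvPolynomial.aeval_X] at hE
  -- extract the coefficient at single 0 i + single 1 j
  have hco := congrArg (MvPolynomial.coeff (Finsupp.single (0 : Fin 2) i + Finsupp.single 1 j)) hE
  rw [Polynomial.eval₂_eq_sum, Polynomial.eval₂_eq_sum, Polynomial.eval₂_eq_sum] at hco
  unfold Polynomial.sum at hco
  rw [Finset.sum_mul_sum] at hco
  have hterm : ∀ (n : ℕ) (a : B), (MvPolynomial.C a) * (MvPolynomial.X (0:Fin 2) * MvPolynomial.X 1) ^ n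
      = MvPolynomial.monomial (Finsupp.single (0:Fin 2) n + Finsupp.single 1 n) a := by
    intro n a
    rw [mul_pow, MvPolynomial.X_pow_eq_monomial, MvPolynomial.X_pow_eq_monomial,
      MvPolynomial.monomial_mul, MvPolynomial.C_apply, MvPolynomial.monomial_mul]
    simp
  have hterm2 : ∀ (n m : ℕ) (a b : B),
      (MvPolynomial.C a) * (MvPolynomial.X (0:Fin 2)) ^ n * ((MvPolynomial.C b) * (MvPolynomial.X (1:Fin 2)) ^ m)
      = MvPolynomial.monomial (Finsupp.single (0:Fin 2) n + Finsupp.single 1 m) (a * b) := by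
    intro n m a b
    rw [MvPolynomial.X_pow_eq_monomial, MvPolynomial.X_pow_eq_monomial,
      MvPolynomial.C_apply, MvPolynomial.C_apply, MvPolynomial.monomial_mul,
      MvPolynomial.monomial_mul, MvPolynomial.monomial_mul]
    simp only [zero_add, mul_one]
  simp only [hterm] at hco
  simp only [hterm2] at hco
  rw [MvPolynomial.coeff_sum] at hco
  simp only [MvPolynomial.coeff_sum, MvPolynomial.coeff_monomial, fs_lemma] at hco
  -- now hco is a sum of ifs on both sides
  have step1 : ∀ x, (∑ x1 ∈ q.support, if x = i ∧ x1 = j then q.coeff x * q.coeff x1 else 0)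
      = if x = i then q.coeff x * q.coeff j else 0 := by
    intro x
    by_cases hx : x = i
    · subst hx
      simp only [true_and, if_pos rfl]
      rw [Finset.sum_ite_eq' q.support j fun x1 => q.coeff x * q.coeff x1]
      by_cases hj : j ∈ q.support
      · simp [hj]
      · simp [hj, Polynomial.notMem_support_iff.mp hj]
    · simp [hx]
  rw [Finset.sum_congr rfl (fun x _ => step1 x),
    Finset.sum_ite_eq' q.support i fun x => q.coeff x * q.coeff j] at hco
  have step0 : (∑ x ∈ q.support, if x = i ∧ x = j then q.coeff x else 0)
      = if i = j then q.coeff i else 0 := by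
    by_cases hij : i = j
    · subst hij
      simp only [and_self, if_pos rfl]
      rw [Finset.sum_ite_eq' q.support i fun x => q.coeff x]
      by_cases hi : i ∈ q.support
      · simp [hi]
      · simp [hi, Polynomial.notMem_support_iff.mp hi]
    · rw [if_neg hij, Finset.sum_eq_zero]
      intro x _
      rw [if_neg]
      rintro ⟨rfl, rfl⟩
      exact hij rfl
  rw [step0] at hco
  rw [hco]
  by_cases hi : i ∈ q.support
  · rw [if_pos hi]
  · rw [if_neg hi, Polynomial.notMem_support_iff.mp hi, zero_mul]

theorem aux_comp
    (η : ∀ (R : Type u) [CommRing R] [Algebra k R], (B ⊗[k] R) ≃ₐ[B] (B ⊗[k] R))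
    (hnat : ∀ (R : Type u) [CommRing R] [Algebra k R] (S : Type u) [CommRing S] [Algebra k S]
      (f : R →ₐ[k] S),
      (Algebra.TensorProduct.map (AlgHom.id B B) f).comp (η R).toAlgHom
        = ((η S).toAlgHom).comp (Algebra.TensorProduct.map (AlgHom.id B B) f)) :
    Polynomial.eval₂ Polynomial.C
      ((polyEquivTensor k B).symm ((η (Polynomial k)).symm (1 ⊗ₜ Polynomial.X)))
      ((polyEquivTensor k B).symm (η (Polynomial k) (1 ⊗ₜ Polynomial.X)))
    = Polynomial.X := by
  set q := (polyEquivTensor k B).symm (η (Polynomial k) (1 ⊗ₜ Polynomial.X)) with hqdef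
  set q' := (polyEquivTensor k B).symm ((η (Polynomial k)).symm (1 ⊗ₜ Polynomial.X)) with hq'def
  have h1 : η (Polynomial k) ((1:B) ⊗ₜ Polynomial.X)
      = Polynomial.eval₂ Algebra.TensorProduct.includeLeftRingHom ((1:B) ⊗ₜ Polynomial.X) q :=
    aux_key k B η hnat (Polynomial k) Polynomial.X
  have h2 : (η (Polynomial k)).symm ((1:B) ⊗ₜ Polynomial.X)
      = Polynomial.eval₂ Algebra.TensorProduct.includeLeftRingHom ((1:B) ⊗ₜ Polynomial.X) q' :=
    aux_key k B (fun R _ _ => (η R).symm) (aux_symm_nat k B η hnat) (Polynomial k) Polynomial.X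
  have h3 : (1:B) ⊗ₜ[k] (Polynomial.X : Polynomial k)
      = (η (Polynomial k)).symm (η (Polynomial k) ((1:B) ⊗ₜ Polynomial.X)) :=
    ((η (Polynomial k)).symm_apply_apply _).symm
  rw [h1] at h3
  have h4 := Polynomial.hom_eval₂ q Algebra.TensorProduct.includeLeftRingHom
    ((η (Polynomial k)).symm.toAlgHom.toRingHom)
    ((1:B) ⊗ₜ[k] (Polynomial.X : Polynomial k))
  have hgapp : ∀ x, (η (Polynomial k)).symm.toAlgHom.toRingHom x = (η (Polynomial k)).symm x :=
    fun _ => rfl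
  have hcomp : ((η (Polynomial k)).symm.toAlgHom.toRingHom).comp
      Algebra.TensorProduct.includeLeftRingHom
      = Algebra.TensorProduct.includeLeftRingHom := by
    ext b
    show (η (Polynomial k)).symm (b ⊗ₜ[k] 1) = b ⊗ₜ[k] 1
    have hb : (b : B) ⊗ₜ[k] (1 : Polynomial k) = algebraMap B (B ⊗[k] Polynomial k) b := by
      rw [Algebra.TensorProduct.algebraMap_apply]; simp
    rw [hb, AlgEquiv.commutes]
  rw [← hgapp, h4, hcomp, hgapp, h2] at h3
  -- now transport along (polyEquivTensor k B).symm
  have e_symm_incl : (((polyEquivTensor k B).symm.toAlgHom.toRingHom :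
        (B ⊗[k] Polynomial k) →+* Polynomial B)).comp Algebra.TensorProduct.includeLeftRingHom
      = (Polynomial.C : B →+* Polynomial B) := by
    apply RingHom.ext
    intro b
    show (polyEquivTensor k B).symm (b ⊗ₜ[k] 1) = Polynomial.C b
    rw [AlgEquiv.symm_apply_eq, polyEquivTensor_apply, Polynomial.eval₂_C]
    rfl
  have e_symm_X : (polyEquivTensor k B).symm ((1:B) ⊗ₜ[k] (Polynomial.X : Polynomial k))
      = Polynomial.X := by
    rw [AlgEquiv.symm_apply_eq, polyEquivTensor_apply, Polynomial.eval₂_X]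
  have h5 := congrArg (polyEquivTensor k B).symm h3
  have push : ∀ (z : B ⊗[k] Polynomial k) (w : Polynomial B),
      (polyEquivTensor k B).symm
        (Polynomial.eval₂ Algebra.TensorProduct.includeLeftRingHom z w)
      = Polynomial.eval₂ Polynomial.C ((polyEquivTensor k B).symm z) w := by
    intro z w
    have hg2 : ∀ x, (polyEquivTensor k B).symm.toAlgHom.toRingHom x
        = (polyEquivTensor k B).symm x := fun _ => rfl
    have hh := Polynomial.hom_eval₂ w Algebra.TensorProduct.includeLeftRingHom
      ((polyEquivTensor k B).symm.toAlgHom.toRingHom) z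
    rw [hg2, hg2, e_symm_incl] at hh
    exact hh
  rw [push, push, e_symm_X, Polynomial.eval₂_C_X] at h5
  exact h5.symm

lemma coeff_mul_one' (u v : Polynomial B) :
    (u * v).coeff 1 = u.coeff 0 * v.coeff 1 + u.coeff 1 * v.coeff 0 := by
  rw [Polynomial.coeff_mul, Finset.Nat.sum_antidiagonal_eq_sum_range_succ_mk]
  simp [Finset.sum_range_succ]

lemma aux_poly (q q' : Polynomial B)
    (hq : ∀ i j, q.coeff i * q.coeff j = if i = j then q.coeff i else 0)
    (hq' : ∀ i j, q'.coeff i * q'.coeff j = if i = j then q'.coeff i else 0)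
    (hcomp : Polynomial.eval₂ Polynomial.C q' q = Polynomial.X) :
    q = Polynomial.X := by
  have e00 : q'.coeff 0 * q'.coeff 0 = q'.coeff 0 := by simpa using hq' 0 0
  have e01 : q'.coeff 0 * q'.coeff 1 = 0 := by simpa using hq' 0 1
  have e10 : q'.coeff 1 * q'.coeff 0 = 0 := by simpa using hq' 1 0
  have pow01 : ∀ n : ℕ, (q' ^ (n+1)).coeff 0 = q'.coeff 0 ∧
      (q' ^ (n+1)).coeff 1 = if n = 0 then q'.coeff 1 else 0 := by
    intro n
    induction n with
    | zero => simp
    | succ m ih =>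
      have hm : q' ^ (m+2) = q' ^ (m+1) * q' := by rw [pow_succ]
      constructor
      · rw [hm, Polynomial.mul_coeff_zero, ih.1, e00]
      · rw [hm, coeff_mul_one' B, ih.1, ih.2, e01]
        by_cases hm0 : m = 0
        · subst hm0; simp [e10]
        · simp [hm0]
  have pow1 : ∀ n : ℕ, (q' ^ n).coeff 1 = if n = 1 then q'.coeff 1 else 0 := by
    intro n
    cases n with
    | zero => simp [Polynomial.coeff_one]
    | succ m =>
      rw [(pow01 m).2]
      by_cases hm0 : m = 0
      · subst hm0; simp
      · rw [if_neg hm0, if_neg (by omega)]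
  have hco := congrArg (fun w : Polynomial B => w.coeff 1) hcomp
  simp only [Polynomial.coeff_X_one] at hco
  rw [Polynomial.eval₂_eq_sum] at hco
  unfold Polynomial.sum at hco
  simp only [Polynomial.finset_sum_coeff, Polynomial.coeff_C_mul, pow1, mul_ite, mul_zero] at hco
  rw [Finset.sum_ite_eq' q.support 1 fun n => q.coeff n * q'.coeff 1] at hco
  by_cases h1 : (1 : ℕ) ∈ q.support
  · rw [if_pos h1] at hco
    have e11 : q.coeff 1 * q.coeff 1 = q.coeff 1 := by simpa using hq 1 1
    have a1 : q.coeff 1 = 1 := by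
      calc q.coeff 1 = q.coeff 1 * (q.coeff 1 * q'.coeff 1) := by rw [hco, mul_one]
        _ = (q.coeff 1 * q.coeff 1) * q'.coeff 1 := by ring
        _ = q.coeff 1 * q'.coeff 1 := by rw [e11]
        _ = 1 := hco
    ext n
    rw [Polynomial.coeff_X]
    by_cases hn : n = 1
    · subst hn; rw [if_pos rfl, a1]
    · rw [if_neg (by omega)]
      have := hq n 1
      rw [if_neg hn, a1, mul_one] at this
      exact this
  · rw [if_neg h1] at hco
    have : Subsingleton B := subsingleton_iff_zero_eq_one.mp hco
    have : Subsingleton (Polynomial B) := by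
      constructor; intro a b; ext m; exact Subsingleton.elim _ _
    exact Subsingleton.elim _ _

/-- Every natural isomorphism of the base-change functor `R ↦ B ⊗[k] R` (from commutative
`k`-algebras to commutative `B`-algebras) is the identity, where `k` is a perfect field of
characteristic `p > 0`. Naturality is expressed with respect to all `k`-algebra maps, via
`Algebra.TensorProduct.map (AlgHom.id B B) f`, and the components are `B`-algebra
isomorphisms. -/
theorem stmt_1 (p : ℕ) [Fact p.Prime]
    (k : Type u) [Field k] [CharP k p] [PerfectRing k p]
    (B : Type u) [CommRing B] [Algebra k B]
    (η : ∀ (R : Type u) [CommRing R] [Algebra k R], (B ⊗[k] R) ≃ₐ[B] (B ⊗[k] R))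
    (hnat : ∀ (R : Type u) [CommRing R] [Algebra k R] (S : Type u) [CommRing S] [Algebra k S]
      (f : R →ₐ[k] S),
      (Algebra.TensorProduct.map (AlgHom.id B B) f).comp (η R).toAlgHom
        = ((η S).toAlgHom).comp (Algebra.TensorProduct.map (AlgHom.id B B) f)) :
    ∀ (R : Type u) [CommRing R] [Algebra k R], η R = AlgEquiv.refl := by
  intro R _ _
  have hqX : (polyEquivTensor k B).symm (η (Polynomial k) (1 ⊗ₜ Polynomial.X))
      = Polynomial.X :=
    aux_poly B _ _ (aux_orth k B η hnat)
      (aux_orth k B (fun R _ _ => (η R).symm) (aux_symm_nat k B η hnat))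
      (aux_comp k B η hnat)
  have key : ∀ r : R, η R ((1:B) ⊗ₜ r) = (1:B) ⊗ₜ r := by
    intro r
    rw [aux_key k B η hnat R r, hqX, Polynomial.eval₂_X]
  apply AlgEquiv.ext
  intro x
  rw [AlgEquiv.coe_refl, id_eq]
  induction x using TensorProduct.induction_on with
  | zero => rw [map_zero]
  | tmul b r =>
    have hsplit : (b : B) ⊗ₜ[k] r = (b ⊗ₜ[k] (1:R)) * ((1:B) ⊗ₜ[k] r) := by
      rw [Algebra.TensorProduct.tmul_mul_tmul, mul_one, one_mul]
    have hb : (b : B) ⊗ₜ[k] (1:R) = algebraMap B (B ⊗[k] R) b := by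
      rw [Algebra.TensorProduct.algebraMap_apply]; simp
    rw [hsplit, map_mul, key, hb, AlgEquiv.commutes]
  | add x y hx hy => rw [map_add, hx, hy]
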